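/- Let M be an m×m complex matrix (m ≥ 1) and let ρ(M) be its spectral radius. Then lim sup_{n→∞} |tr(M^{n+1})|^{1/n} = ρ(M), where tr denotes the trace and the lim sup is taken over n ≥ 1. -/

import Mathlib

section PowerSumAux

open Polynomial Matrix

lemma eval_charpoly {m : ℕ} (M : Matrix (Fin m) (Fin m) ℂ) (x : ℂ) :
    M.charpoly.eval x = (Matrix.scalar (Fin m) x - M).det := by
  exact Matrix.eval_charpoly M x

lemma multiset_finset_prod_comm {ι : Type*} (S : Multiset ℂ) (t : Finset ι) (f : ι → ℂ → ℂ) :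
    ∏ i ∈ t, (S.map (f i)).prod = (S.map fun a => ∏ i ∈ t, f i a).prod := by
  induction S using Multiset.induction with
  | empty => simp
  | cons a s ih => simp [Finset.prod_mul_distrib, ih]

lemma det_aeval_prod {m : ℕ} (M : Matrix (Fin m) (Fin m) ℂ) {ι : Type*} (t : Finset ι)
    (f : ι → Polynomial ℂ) :
    (Polynomial.aeval M (∏ i ∈ t, f i)).det = ∏ i ∈ t, (Polynomial.aeval M (f i)).det := by
  classical
  induction t using Finset.induction with
  | empty => simp
  | insert _ _ h ih => rw [Finset.prod_insert h, Finset.prod_insert h, _root_.map_mul, Matrix.det_mul, ih]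

lemma charpoly_pow_roots {m : ℕ} (M : Matrix (Fin m) (Fin m) ℂ) {n : ℕ} (hn : 0 < n) :
    (M ^ n).charpoly.roots = M.charpoly.roots.map (· ^ n) := by
  have hcard : M.charpoly.roots.card = m := by
    have h1 := Polynomial.splits_iff_card_roots.mp (IsAlgClosed.splits M.charpoly)
    have h2 := Matrix.charpoly_natDegree_eq_dim M
    rw [h1, h2, Fintype.card_fin]
  have key : (M ^ n).charpoly = ((M.charpoly.roots.map (· ^ n)).map fun z => X - C z).prod := by
    apply Polynomial.funext
    intro x
    obtain ⟨sc, hs⟩ := IsAlgClosed.exists_pow_nat_eq (k := ℂ) x hn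
    have hζ := Complex.isPrimitiveRoot_exp n hn.ne'
    set ζ : ℂ := Complex.exp (2 * Real.pi * Complex.I / n) with hζdef
    have hfact : (X : ℂ[X]) ^ n - C x = ∏ i ∈ Finset.range n, (X - C (ζ ^ i * sc)) :=
      X_pow_sub_C_eq_prod hζ hn hs
    set R := M.charpoly.roots with hRdef
    have hevalc : ∀ c : ℂ, M.charpoly.eval c = (R.map fun a => c - a).prod := by
      intro c
      conv_lhs => rw [(IsAlgClosed.splits M.charpoly).eq_prod_roots_of_monic
        (Matrix.charpoly_monic M)]
      rw [eval_multiset_prod, Multiset.map_map]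
      simp
      rfl
    have hevalL : ∀ lam : ℂ, ∏ i ∈ Finset.range n, (ζ ^ i * sc - lam)
        = (-1 : ℂ) ^ n * (lam ^ n - x) := by
      intro lam
      have := congrArg (Polynomial.eval lam) hfact
      simp only [eval_sub, eval_pow, eval_X, eval_C, eval_prod] at this
      calc ∏ i ∈ Finset.range n, (ζ ^ i * sc - lam)
          = ∏ i ∈ Finset.range n, (-1 : ℂ) * (lam - ζ ^ i * sc) := by
            apply Finset.prod_congr rfl; intros; ring
        _ = (-1 : ℂ) ^ n * ∏ i ∈ Finset.range n, (lam - ζ ^ i * sc) := by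
            rw [Finset.prod_mul_distrib, Finset.prod_const, Finset.card_range]
        _ = (-1 : ℂ) ^ n * (lam ^ n - x) := by rw [← this]
    have h1 : Matrix.scalar (Fin m) x - M ^ n = - (Polynomial.aeval M ((X : ℂ[X]) ^ n - C x)) := by
      rw [map_sub, Polynomial.aeval_X_pow, Polynomial.aeval_C]
      rw [Matrix.scalar_apply, Matrix.algebraMap_eq_diagonal]
      simp [Pi.algebraMap_def, Algebra.algebraMap_self_apply]
    have h2 : ∀ c : ℂ, Polynomial.aeval M ((X : ℂ[X]) - C c) = M - Matrix.scalar (Fin m) c := by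
      intro c
      rw [map_sub, Polynomial.aeval_X, Polynomial.aeval_C]
      rw [Matrix.scalar_apply, Matrix.algebraMap_eq_diagonal]
      simp [Pi.algebraMap_def, Algebra.algebraMap_self_apply]
    have hdet : ∀ c : ℂ, (M - Matrix.scalar (Fin m) c).det
        = (-1 : ℂ) ^ m * (R.map fun a => c - a).prod := by
      intro c
      calc (M - Matrix.scalar (Fin m) c).det = (-(Matrix.scalar (Fin m) c - M)).det := by
            rw [neg_sub]
        _ = (-1 : ℂ) ^ m * (Matrix.scalar (Fin m) c - M).det := by
            rw [Matrix.det_neg, Fintype.card_fin]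
        _ = (-1 : ℂ) ^ m * (Multiset.map (fun a => c - a) R).prod := by
            rw [← _root_.eval_charpoly, hevalc]
    have hcardR : Multiset.card R = m := hcard
    calc Polynomial.eval x (M ^ n).charpoly
        = (Matrix.scalar (Fin m) x - M ^ n).det := _root_.eval_charpoly _ _
      _ = (-1 : ℂ) ^ m * (Polynomial.aeval M ((X : ℂ[X]) ^ n - C x)).det := by
          rw [h1, Matrix.det_neg, Fintype.card_fin]
      _ = (-1 : ℂ) ^ m * ∏ i ∈ Finset.range n, (M - Matrix.scalar (Fin m) (ζ ^ i * sc)).det := by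
          rw [hfact, det_aeval_prod]
          simp only [h2]
      _ = (-1 : ℂ) ^ m * ∏ i ∈ Finset.range n,
            ((-1 : ℂ) ^ m * (R.map fun a => ζ ^ i * sc - a).prod) := by
          simp only [hdet]
      _ = (-1 : ℂ) ^ m * (((-1 : ℂ) ^ m) ^ n *
            ∏ i ∈ Finset.range n, (R.map fun a => ζ ^ i * sc - a).prod) := by
          rw [Finset.prod_mul_distrib, Finset.prod_const, Finset.card_range]
      _ = (-1 : ℂ) ^ m * (((-1 : ℂ) ^ m) ^ n *
            (R.map fun a => ∏ i ∈ Finset.range n, (ζ ^ i * sc - a)).prod) := by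
          rw [multiset_finset_prod_comm]
      _ = (-1 : ℂ) ^ m * (((-1 : ℂ) ^ m) ^ n *
            (R.map fun a => (-1 : ℂ) ^ n * (a ^ n - x)).prod) := by
          simp only [hevalL]
      _ = (-1 : ℂ) ^ m * (((-1 : ℂ) ^ m) ^ n * (((-1 : ℂ) ^ n) ^ m *
            (R.map fun a => a ^ n - x).prod)) := by
          rw [show (fun a : ℂ => (-1 : ℂ) ^ n * (a ^ n - x)) = fun a : ℂ =>
            (fun _ : ℂ => (-1 : ℂ) ^ n) a * (fun a : ℂ => a ^ n - x) a from rfl,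
            Multiset.prod_map_mul, Multiset.map_const', Multiset.prod_replicate, hcardR]
      _ = (-1 : ℂ) ^ m * (((-1 : ℂ) ^ m) ^ n * (((-1 : ℂ) ^ n) ^ m * (((-1 : ℂ)) ^ m *
            (R.map fun a => x - a ^ n).prod))) := by
          rw [show (fun a : ℂ => a ^ n - x) = fun a : ℂ =>
            (fun _ : ℂ => (-1 : ℂ)) a * (fun a : ℂ => x - a ^ n) a from funext fun a => by ring,
            Multiset.prod_map_mul, Multiset.map_const', Multiset.prod_replicate, hcardR]
      _ = (R.map fun a => x - a ^ n).prod := by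
          rw [← pow_mul, ← pow_mul]
          rw [show ((-1:ℂ)^m * ((-1:ℂ)^(m*n) * ((-1:ℂ)^(n*m) * ((-1:ℂ)^m *
            (R.map fun a => x - a ^ n).prod)))) = ((-1:ℂ)^m)^2 * ((-1:ℂ)^(m*n))^2 *
            (R.map fun a => x - a ^ n).prod from by rw [mul_comm n m]; ring]
          simp [← pow_mul, pow_mul_comm]
      _ = Polynomial.eval x (((M.charpoly.roots.map (· ^ n)).map fun z => X - C z).prod) := by
          rw [eval_multiset_prod, Multiset.map_map, Multiset.map_map]
          simp
          rfl
  rw [key, Polynomial.roots_multiset_prod_X_sub_C]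

lemma trace_pow_eq_sum {m : ℕ} (M : Matrix (Fin m) (Fin m) ℂ) {k : ℕ} (hk : 0 < k) :
    (M ^ k).trace = (M.charpoly.roots.map (· ^ k)).sum := by
  rw [Matrix.trace_eq_sum_roots_charpoly, charpoly_pow_roots M hk]

lemma multiset_sup_mem (s : Multiset NNReal) (hs : s ≠ 0) : s.sup ∈ s := by
  induction s using Multiset.induction with
  | empty => exact absurd rfl hs
  | cons a t ih =>
    rw [Multiset.sup_cons]
    rcases eq_or_ne t 0 with rfl | ht
    · simp
    · rcases le_total a t.sup with h | h
      · rw [sup_eq_right.mpr h]; exact Multiset.mem_cons_of_mem (ih ht)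
      · rw [sup_eq_left.mpr h]; exact Multiset.mem_cons_self a t

lemma tendsto_aux {c r : ℝ} (hc : 0 < c) (hr : 0 < r) :
    Filter.Tendsto (fun n : ℕ => (c * r ^ (n + 1)) ^ ((1 : ℝ) / n))
      Filter.atTop (nhds r) := by
  have heq : ∀ᶠ n : ℕ in Filter.atTop, (c * r ^ (n + 1)) ^ ((1 : ℝ) / n)
      = Real.exp (Real.log c * ((1 : ℝ) / n) + Real.log r * ((n + 1 : ℝ) / n)) := by
    filter_upwards [Filter.eventually_ge_atTop 1] with n hn
    rw [Real.rpow_def_of_pos (by positivity), Real.log_mul hc.ne' (by positivity),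
      Real.log_pow]
    congr 1
    push_cast
    ring
  rw [Filter.tendsto_congr' heq]
  have h1 : Filter.Tendsto (fun n : ℕ => Real.log c * ((1 : ℝ) / n)) Filter.atTop (nhds 0) := by
    simpa using (tendsto_one_div_atTop_nhds_zero_nat.const_mul (Real.log c))
  have h2 : Filter.Tendsto (fun n : ℕ => ((n : ℝ) + 1) / n) Filter.atTop (nhds 1) := by
    have : (fun n : ℕ => ((n : ℝ) + 1) / n) =ᶠ[Filter.atTop]
        fun n : ℕ => 1 + (1 : ℝ) / n := by
      filter_upwards [Filter.eventually_ge_atTop 1] with n hn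
      have : (n : ℝ) ≠ 0 := by positivity
      field_simp
    rw [Filter.tendsto_congr' this]
    simpa using (tendsto_const_nhds (x := (1 : ℝ))).add (tendsto_one_div_atTop_nhds_zero_nat (𝕜 := ℝ))
  have h3 : Filter.Tendsto (fun n : ℕ => Real.log c * ((1 : ℝ) / n)
      + Real.log r * ((n + 1 : ℝ) / n)) Filter.atTop (nhds (0 + Real.log r * 1)) :=
    h1.add (h2.const_mul (Real.log r))
  have h4 := (Real.continuous_exp.tendsto _).comp h3
  simpa [Real.exp_log hr, Function.comp_def] using h4

set_option maxHeartbeats 2000000 in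
/-- The key analytic lemma about power sums. -/
lemma power_sum_limsup (R : Multiset ℂ) (hR : R ≠ 0) :
    Filter.limsup (fun n : ℕ =>
        ‖(R.map (· ^ (n + 1))).sum‖ ^ ((1 : ℝ) / n)) Filter.atTop
      = (((R.map fun z => ‖z‖₊).sup : NNReal) : ℝ) := by
  classical
  set ρn : NNReal := (R.map fun z => ‖z‖₊).sup with hρn
  set ρ : ℝ := (ρn : ℝ) with hρdef
  set f : ℕ → ℝ := fun n => ‖(R.map (· ^ (n + 1))).sum‖ ^ ((1 : ℝ) / n) with hf
  have hρ0 : 0 ≤ ρ := ρn.coe_nonneg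
  have hfnn : ∀ n, 0 ≤ f n := fun n => Real.rpow_nonneg (norm_nonneg _) _
  rcases eq_or_ne ρn 0 with hρz | hρnz
  · -- all roots are zero
    have hz : ∀ z ∈ R, z = 0 := by
      intro z hz
      have : ‖z‖₊ ≤ ρn := Multiset.le_sup (Multiset.mem_map_of_mem _ hz)
      rw [hρz, le_zero_iff] at this
      simpa using this
    have hsum : ∀ n : ℕ, (R.map (· ^ (n + 1))).sum = 0 := by
      intro n
      apply Multiset.sum_eq_zero
      intro x hx
      obtain ⟨z, hzR, rfl⟩ := Multiset.mem_map.mp hx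
      rw [hz z hzR, zero_pow (Nat.succ_ne_zero n)]
    have hfo : f =ᶠ[Filter.atTop] fun _ => (0 : ℝ) := by
      filter_upwards [Filter.eventually_ge_atTop 1] with n hn
      have : (1 : ℝ) / n ≠ 0 := by positivity
      simp only [hf, hsum n, norm_zero]
      rw [Real.zero_rpow this]
    rw [Filter.limsup_congr hfo, Filter.limsup_const, hρdef, hρz]
    simp
  · have hρpos : 0 < ρ := by positivity
    -- upper bound facts
    have hzle : ∀ z ∈ R, ‖z‖ ≤ ρ := by
      intro z hz
      have : ‖z‖₊ ≤ ρn := Multiset.le_sup (Multiset.mem_map_of_mem _ hz)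
      exact_mod_cast this
    have hcardpos : 0 < (Multiset.card R : ℝ) := by
      have := Multiset.card_pos.mpr hR
      exact_mod_cast this
    have hub : ∀ k : ℕ, ‖(R.map (· ^ k)).sum‖ ≤ (Multiset.card R : ℝ) * ρ ^ k := by
      intro k
      calc ‖(R.map (· ^ k)).sum‖ = ‖(R.map (· ^ k)).sum‖ := rfl
        _ ≤ ((R.map (· ^ k)).map norm).sum := norm_multiset_sum_le _
        _ ≤ Multiset.card ((R.map (· ^ k)).map norm) • (ρ ^ k) := by
            apply Multiset.sum_le_card_nsmul
            intro x hx
            obtain ⟨y, hy, rfl⟩ := Multiset.mem_map.mp hx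
            obtain ⟨z, hzR, rfl⟩ := Multiset.mem_map.mp hy
            rw [norm_pow]
            exact pow_le_pow_left₀ (norm_nonneg z) (hzle z hzR) k
        _ = (Multiset.card R : ℝ) * ρ ^ k := by
            rw [Multiset.card_map, Multiset.card_map, nsmul_eq_mul]
    set g : ℕ → ℝ := fun n => ((Multiset.card R : ℝ) * ρ ^ (n + 1)) ^ ((1 : ℝ) / n) with hg
    have hgt : Filter.Tendsto g Filter.atTop (nhds ρ) := tendsto_aux hcardpos hρpos
    have hfg : ∀ n, f n ≤ g n := by
      intro n
      exact Real.rpow_le_rpow (norm_nonneg _) (hub (n + 1)) (by positivity)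
    have hbdd : Filter.IsBoundedUnder (· ≤ ·) Filter.atTop f :=
      hgt.isBoundedUnder_le.mono_le (Filter.Eventually.of_forall hfg)
    have hcob : Filter.IsCoboundedUnder (· ≤ ·) Filter.atTop f :=
      Filter.isCoboundedUnder_le_of_le Filter.atTop hfnn
    have hup : Filter.limsup f Filter.atTop ≤ ρ := by
      have := Filter.limsup_le_limsup (Filter.Eventually.of_forall hfg) hcob
        hgt.isBoundedUnder_le
      rwa [hgt.limsup_eq] at this
    have hlow : ρ ≤ Filter.limsup f Filter.atTop := by
      -- Vandermonde setup
      set T : Finset ℂ := R.toFinset with hT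
      have hTne : T.Nonempty := by
        rw [hT, Multiset.toFinset_nonempty]
        exact hR
      have hspos : 0 < T.card := Finset.card_pos.mpr hTne
      set e := T.equivFin with he
      set v : Fin T.card → ℂ := fun i => ((e.symm i : T) : ℂ) with hv
      have hvinj : Function.Injective v :=
        Subtype.coe_injective.comp e.symm.injective
      set V : Matrix (Fin T.card) (Fin T.card) ℂ := (Matrix.vandermonde v)ᵀ with hV
      have hdetV : V.det ≠ 0 := by
        rw [hV, Matrix.det_transpose]
        exact Matrix.det_vandermonde_ne_zero_iff.mpr hvinj
      set W : Matrix (Fin T.card) (Fin T.card) ℂ := V⁻¹ with hW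
      have hWV : W * V = 1 := Matrix.nonsing_inv_mul V (isUnit_iff_ne_zero.mpr hdetV)
      -- the root of maximal modulus
      obtain ⟨z₀, hz₀R, hz₀⟩ : ∃ z₀ ∈ R, ‖z₀‖₊ = ρn := by
        have hmem := multiset_sup_mem (R.map fun z => ‖z‖₊) (by
          simp only [ne_eq, Multiset.map_eq_zero]; exact hR)
        obtain ⟨z₀, hz₀R, h⟩ := Multiset.mem_map.mp hmem
        exact ⟨z₀, hz₀R, h⟩
      have habs₀ : ‖z₀‖ = ρ := by
        rw [hρdef, ← hz₀]; rfl
      set j₀ : Fin T.card := e ⟨z₀, Multiset.mem_toFinset.mpr hz₀R⟩ with hj₀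
      have hvj₀ : v j₀ = z₀ := by
        show ((e.symm (e ⟨z₀, Multiset.mem_toFinset.mpr hz₀R⟩) : T) : ℂ) = z₀
        rw [Equiv.symm_apply_apply]
      set K : ℝ := (∑ j, ‖W j₀ j‖) + 1 with hK
      have hKpos : 0 < K := by
        have : 0 ≤ ∑ j, ‖W j₀ j‖ :=
          Finset.sum_nonneg fun j _ => norm_nonneg _
        linarith
      -- key estimate
      have key : ∀ N : ℕ, ∃ j : Fin T.card,
          ρ ^ N ≤ K * ‖(R.map (· ^ (N + (j : ℕ)))).sum‖ := by
        intro N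
        set a : Fin T.card → ℂ := fun j => (R.count (v j) : ℂ) * v j ^ N with ha
        set pv : Fin T.card → ℂ := fun i => (R.map (· ^ (N + (i : ℕ)))).sum with hpv
        have hPV : V.mulVec a = pv := by
          funext i
          rw [Matrix.mulVec, dotProduct]
          simp only [hpv]
          rw [Finset.sum_multiset_map_count]
          rw [← Finset.sum_coe_sort (R.toFinset) (fun z => R.count z • z ^ (N + (i : ℕ)))]
          rw [← Equiv.sum_comp e.symm
            (fun z : T => R.count (z : ℂ) • ((z : ℂ)) ^ (N + (i : ℕ)))]
          apply Finset.sum_congr rfl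
          intro j _
          simp only [hV, Matrix.transpose_apply, Matrix.vandermonde_apply, ha]
          rw [nsmul_eq_mul, pow_add]
          ring
        have haW : W.mulVec pv = a := by
          rw [← hPV, Matrix.mulVec_mulVec, hWV, Matrix.one_mulVec]
        -- lower bound on |a j₀|
        have hcount : (1 : ℝ) ≤ R.count z₀ := by
          have := Multiset.count_pos.mpr hz₀R
          exact_mod_cast this
        have h1 : ρ ^ N ≤ ‖a j₀‖ := by
          simp only [ha, hvj₀]
          rw [norm_mul, norm_pow, Complex.norm_natCast, habs₀]
          calc ρ ^ N = 1 * ρ ^ N := (one_mul _).symm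
            _ ≤ (R.count z₀ : ℝ) * ρ ^ N :=
                mul_le_mul_of_nonneg_right hcount (pow_nonneg hρ0 N)
        -- upper bound via the max of |pv|
        have hnefin : Nonempty (Fin T.card) := Fin.pos_iff_nonempty.mp hspos
        set B : ℝ := Finset.univ.sup' (Finset.univ_nonempty) (fun j => ‖pv j‖)
          with hB
        have hBle : ∀ j, ‖pv j‖ ≤ B := by
          intro j
          rw [hB]
          exact Finset.le_sup' (fun j => ‖pv j‖) (Finset.mem_univ j)
        obtain ⟨jm, _, hjm⟩ := Finset.exists_mem_eq_sup'
          (s := (Finset.univ : Finset (Fin T.card))) Finset.univ_nonempty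
          (fun j => ‖pv j‖)
        have hBeq : B = ‖pv jm‖ := by rw [hB]; exact hjm
        have hBnn : 0 ≤ B := hBeq ▸ norm_nonneg _
        have h2 : ‖a j₀‖ ≤ K * B := by
          have : a j₀ = ∑ j, W j₀ j * pv j := by
            rw [← haW, Matrix.mulVec, dotProduct]
          rw [this]
          calc ‖∑ j, W j₀ j * pv j‖
              ≤ ∑ j, ‖W j₀ j * pv j‖ := norm_sum_le _ _
            _ ≤ ∑ j, ‖W j₀ j‖ * B := by
                apply Finset.sum_le_sum
                intro j _
                rw [norm_mul]
                exact mul_le_mul_of_nonneg_left (hBle j) (norm_nonneg _)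
            _ = (∑ j, ‖W j₀ j‖) * B := by rw [← Finset.sum_mul]
            _ ≤ K * B := by
                apply mul_le_mul_of_nonneg_right _ hBnn
                rw [hK]
                linarith
        refine ⟨jm, ?_⟩
        have : ρ ^ N ≤ K * B := le_trans h1 h2
        rwa [hBeq] at this
      set c : ℝ := 1 / (K * max 1 (ρ ^ T.card)) with hc
      have hmaxpos : 0 < max 1 (ρ ^ T.card) := lt_of_lt_of_le one_pos (le_max_left _ _)
      have hcpos : 0 < c := by rw [hc]; positivity
      have hfreq : ∀ N₀ : ℕ, ∃ n : ℕ, N₀ ≤ n ∧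
          c * ρ ^ n ≤ ‖(R.map (· ^ n)).sum‖ := by
        intro N₀
        obtain ⟨j, hj⟩ := key N₀
        refine ⟨N₀ + (j : ℕ), Nat.le_add_right _ _, ?_⟩
        have hρj : ρ ^ (j : ℕ) ≤ max 1 (ρ ^ T.card) := by
          rcases le_total ρ 1 with h | h
          · exact le_max_of_le_left (pow_le_one₀ hρ0 h)
          · exact le_max_of_le_right (pow_le_pow_right₀ h (le_of_lt j.isLt))
        have hqnn : 0 ≤ ‖(R.map (· ^ (N₀ + (j : ℕ)))).sum‖ :=
          norm_nonneg _
        calc c * ρ ^ (N₀ + (j : ℕ)) = c * (ρ ^ N₀ * ρ ^ (j : ℕ)) := by rw [pow_add]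
          _ ≤ c * (ρ ^ N₀ * max 1 (ρ ^ T.card)) := by
              apply mul_le_mul_of_nonneg_left _ hcpos.le
              exact mul_le_mul_of_nonneg_left hρj (pow_nonneg hρ0 _)
          _ = ρ ^ N₀ * (1 / K) := by
              rw [hc]
              field_simp
          _ ≤ ‖(R.map (· ^ (N₀ + (j : ℕ)))).sum‖ := by
              rw [mul_one_div, div_le_iff₀ hKpos]
              calc ρ ^ N₀ ≤ K * ‖(R.map (· ^ (N₀ + (j : ℕ)))).sum‖ := hj
                _ = ‖(R.map (· ^ (N₀ + (j : ℕ)))).sum‖ * K := mul_comm _ _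
      refine le_of_forall_lt fun b hb => ?_
      obtain ⟨b', hbb', hb'ρ⟩ := exists_between hb
      refine lt_of_lt_of_le hbb' (Filter.le_limsup_of_frequently_le ?_ hbdd)
      rcases le_or_gt b' 0 with hb0 | hb0
      · exact (Filter.Eventually.of_forall fun n => le_trans hb0 (hfnn n)).frequently
      · have hgt2 := tendsto_aux hcpos hρpos
        have hev : ∀ᶠ k : ℕ in Filter.atTop, b' < (c * ρ ^ (k + 1)) ^ ((1 : ℝ) / k) :=
          hgt2.eventually (eventually_gt_nhds hb'ρ)
        have hfr : ∃ᶠ k : ℕ in Filter.atTop, (c * ρ ^ (k + 1)) ^ ((1 : ℝ) / k) ≤ f k := by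
          rw [Filter.frequently_atTop]
          intro K₀
          obtain ⟨n, hn, hcn⟩ := hfreq (K₀ + 1)
          have hn1 : 1 ≤ n := le_trans (Nat.le_add_left 1 K₀) hn
          have hsub : n - 1 + 1 = n := by omega
          refine ⟨n - 1, by omega, ?_⟩
          simp only [hf, hsub]
          exact Real.rpow_le_rpow (mul_nonneg hcpos.le (pow_nonneg hρ0 _)) hcn
            (one_div_nonneg.mpr (Nat.cast_nonneg _))
        exact (hfr.and_eventually hev).mono fun k ⟨h1, h2⟩ => le_of_lt (lt_of_lt_of_le h2 h1)
    exact le_antisymm hup hlow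

end PowerSumAux

/-- The spectral radius of a square complex matrix: the maximal absolute value
of the roots in `ℂ` of its characteristic polynomial. -/
noncomputable def specRad {m : ℕ} (M : Matrix (Fin m) (Fin m) ℂ) : ℝ :=
  (((M.charpoly.roots.map fun z => ‖z‖₊).sup : NNReal) : ℝ)

/-- `limsup |tr(M^{n+1})|^{1/n} = ρ(M)`. -/
theorem limsup_abs_trace_pow_succ_rpow_eq_spectralRadius
    {m : ℕ} (hm : 1 ≤ m) (M : Matrix (Fin m) (Fin m) ℂ) :
    Filter.limsup
      (fun n : ℕ => ‖Matrix.trace (M ^ (n + 1))‖ ^ ((1 : ℝ) / n))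
      Filter.atTop = specRad M := by
  have hcard : Multiset.card M.charpoly.roots = m := by
    have h1 := Polynomial.splits_iff_card_roots.mp
      (IsAlgClosed.splits M.charpoly)
    have h2 := Matrix.charpoly_natDegree_eq_dim M
    rw [h1, h2, Fintype.card_fin]
  have hR : M.charpoly.roots ≠ 0 := by
    intro h
    rw [h, Multiset.card_zero] at hcard
    omega
  have hfun : (fun n : ℕ => ‖Matrix.trace (M ^ (n + 1))‖ ^ ((1 : ℝ) / n))
      = fun n : ℕ => ‖(M.charpoly.roots.map (· ^ (n + 1))).sum‖ ^ ((1 : ℝ) / n) :=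
    funext fun n => by rw [trace_pow_eq_sum M (Nat.succ_pos n)]
  rw [hfun, power_sum_limsup M.charpoly.roots hR, specRad]
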